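/- If f is a graceful 5-coloring of a graph G and v is a vertex of degree at least 3, then f(v) ∈ {1, 2, 4, 5}. -/

import Mathlib

open SimpleGraph

/-- A graceful coloring: proper, and differences at each vertex pairwise distinct. -/
def IsGraceful {V : Type*} (G : SimpleGraph V) (f : V → ℕ) : Prop :=
  (∀ ⦃u v⦄, G.Adj u v → f u ≠ f v) ∧
  ∀ ⦃v u w⦄, G.Adj v u → G.Adj v w → u ≠ w →
    ((f v : ℤ) - f u).natAbs ≠ ((f v : ℤ) - f w).natAbs

/-- A graceful `k`-coloring: graceful with colors in `{1,…,k}`. -/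
def IsGracefulK {V : Type*} (G : SimpleGraph V) (k : ℕ) (f : V → ℕ) : Prop :=
  IsGraceful G f ∧ ∀ v, f v ∈ Finset.Icc 1 k

/-- The graceful chromatic number. -/
noncomputable def gracefulChromatic {V : Type*} (G : SimpleGraph V) : ℕ :=
  sInf {k | ∃ f : V → ℕ, IsGracefulK G k f}

/-- The square of a graph: vertices adjacent iff at distance at most 2. -/
def squareGraph {V : Type*} (G : SimpleGraph V) : SimpleGraph V where
  Adj u v := u ≠ v ∧ (G.Adj u v ∨ ∃ w, G.Adj u w ∧ G.Adj w v)
  symm := by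
    constructor
    rintro u v ⟨hne, h | ⟨w, h1, h2⟩⟩
    · exact ⟨hne.symm, Or.inl h.symm⟩
    · exact ⟨hne.symm, Or.inr ⟨w, h2.symm, h1.symm⟩⟩
  loopless := by constructor; rintro u ⟨hne, -⟩; exact hne rfl

/-- A set of naturals is AP-free: no three distinct elements `i, j, l` with `|i-j| = |j-l|`. -/
def APFree (S : Finset ℕ) : Prop :=
  ∀ i ∈ S, ∀ j ∈ S, ∀ l ∈ S, i ≠ j → j ≠ l → i ≠ l →
    ((i : ℤ) - j).natAbs ≠ ((j : ℤ) - l).natAbs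

/-- OEIS A065825: least `k` such that `{1,…,k}` contains an AP-free `n`-element subset. -/
noncomputable def A (n : ℕ) : ℕ :=
  sInf {k | ∃ S ⊆ Finset.Icc 1 k, S.card = n ∧ APFree S}

theorem stmt12 {V : Type*} [Fintype V] (G : SimpleGraph V) [DecidableRel G.Adj]
    (f : V → ℕ) (hf : IsGracefulK G 5 f) (v : V) (hv : 3 ≤ G.degree v) :
    f v ∈ ({1, 2, 4, 5} : Finset ℕ) := by
  obtain ⟨⟨hprop, hgrace⟩, hrange⟩ := hf
  have hfv := hrange v
  simp only [Finset.mem_Icc] at hfv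
  by_contra hmem
  have hfv3 : f v = 3 := by
    simp only [Finset.mem_insert, Finset.mem_singleton] at hmem
    omega
  -- get 3 distinct neighbors
  classical
  rw [← G.card_neighborFinset_eq_degree] at hv
  obtain ⟨s, hs, hcard⟩ := Finset.exists_subset_card_eq hv
  obtain ⟨a, b, c, hab, hac, hbc, hseq⟩ := Finset.card_eq_three.mp hcard
  subst hseq
  have ha : G.Adj v a := (G.mem_neighborFinset v a).mp (hs (by simp))
  have hb : G.Adj v b := (G.mem_neighborFinset v b).mp (hs (by simp))
  have hc : G.Adj v c := (G.mem_neighborFinset v c).mp (hs (by simp))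
  have key : ∀ u, G.Adj v u → ((f v : ℤ) - f u).natAbs ∈ ({1, 2} : Finset ℕ) := by
    intro u hu
    have h1 := hrange u
    have h2 := hprop hu
    simp only [Finset.mem_Icc] at h1
    simp only [Finset.mem_insert, Finset.mem_singleton]
    omega
  have ka := key a ha
  have kb := key b hb
  have kc := key c hc
  have d1 := hgrace ha hb hab
  have d2 := hgrace hb hc hbc
  have d3 := hgrace ha hc hac
  simp only [Finset.mem_insert, Finset.mem_singleton] at ka kb kc
  omega
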